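/- For all c, d ≥ 1: for each client v ∈ C, P( r_1(N(v)) ≥ 2dΔ ) ≤ e^{−dΔ/3}; consequently P( r_1 ≤ 2dΔ ) ≥ 1 − n·e^{−dΔ/3} and P( K_1 ≤ 2/c ) ≥ 1 − n·e^{−dΔ/3}. In particular, if Δ ≥ η·log²n for a constant η > 0, then r_1 ≤ 2dΔ and K_1 ≤ 2/c hold with high probability. -/

import Mathlib

open MeasureTheory ProbabilityTheory Finset
open scoped ENNReal Classical

noncomputable section

namespace LoadBalancing

/-- State of the ball-assignment process: for each client `v` and ball index `i`,
whether the ball is still alive (not yet accepted), and for each server a counter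
(for SAER: the total number of requests received so far; for RAES: the total number
of accepted requests so far). -/
structure PState (C 𝕊 : Type*) (d : ℕ) where
  alive : C → Fin d → Prop
  total : 𝕊 → ℕ

variable {C 𝕊 Ω : Type*} [Fintype C] [Fintype 𝕊]

/-- The number of balls that server `u` receives in a round in which the set of
alive balls is `al` and the random destinations are given by `σ`. -/
def recvCount {d : ℕ} (al : C → Fin d → Prop) (σ : C → Fin d → 𝕊) (u : 𝕊) : ℕ :=
  (Finset.univ.filter (fun p : C × Fin d => al p.1 p.2 ∧ σ p.1 p.2 = u)).card

/-- One round of SAER with threshold `τ` (= c·d): `total` counts all requests ever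
received; a server is *burned* as soon as `τ ≤ total`, and a burned server rejects
all requests of the current and of all subsequent rounds; non-burned servers accept
all balls received. -/
def sStep {d : ℕ} (τ : ℝ) (σ : C → Fin d → 𝕊) (st : PState C 𝕊 d) : PState C 𝕊 d where
  alive := fun v i => st.alive v i ∧
    τ ≤ ((st.total (σ v i) + recvCount st.alive σ (σ v i) : ℕ) : ℝ)
  total := fun u => st.total u + recvCount st.alive σ u

/-- The SAER state after `t` rounds, where the (random) destination choices of
round `s ≥ 1` are given by `σ s`.  Initially all `d` balls of every client are alive. -/
def sState {d : ℕ} (τ : ℝ) (σ : ℕ → C → Fin d → 𝕊) : ℕ → PState C 𝕊 d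
  | 0 => ⟨fun _ _ => True, fun _ => 0⟩
  | t + 1 => sStep τ (σ (t + 1)) (sState τ σ t)

/-- One round of RAES with threshold `τ` (= c·d): `total` counts the accepted
requests; a server accepts all balls received in the current round unless doing so
would make its number of accepted balls exceed `τ`, in which case it is *saturated*
and rejects all balls received in the current round (but may accept again later). -/
def rStep {d : ℕ} (τ : ℝ) (σ : C → Fin d → 𝕊) (st : PState C 𝕊 d) : PState C 𝕊 d where
  alive := fun v i => st.alive v i ∧
    τ < ((st.total (σ v i) + recvCount st.alive σ (σ v i) : ℕ) : ℝ)
  total := fun u =>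
    if τ < ((st.total u + recvCount st.alive σ u : ℕ) : ℝ) then st.total u
    else st.total u + recvCount st.alive σ u

/-- The RAES state after `t` rounds. -/
def rState {d : ℕ} (τ : ℝ) (σ : ℕ → C → Fin d → 𝕊) : ℕ → PState C 𝕊 d
  | 0 => ⟨fun _ _ => True, fun _ => 0⟩
  | t + 1 => rStep τ (σ (t + 1)) (rState τ σ t)

/-- The destination choices determined by a sample point `ω`. -/
def env {d : ℕ} (choice : ℕ → C → Fin d → Ω → 𝕊) (ω : Ω) : ℕ → C → Fin d → 𝕊 :=
  fun t v i => choice t v i ω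

/-- `a_t^{(i)}(v)`: the `i`-th ball of client `v` is still alive at the beginning of
round `t` (`t ≥ 1`) of SAER. -/
def aliveAt {d : ℕ} (τ : ℝ) (choice : ℕ → C → Fin d → Ω → 𝕊) (t : ℕ) (v : C) (i : Fin d)
    (ω : Ω) : Prop :=
  (sState τ (env choice ω) (t - 1)).alive v i

/-- `r_t(u)`: the number of balls that server `u` receives at round `t` of SAER. -/
def recvAt {d : ℕ} (τ : ℝ) (choice : ℕ → C → Fin d → Ω → 𝕊) (t : ℕ) (u : 𝕊) (ω : Ω) : ℕ :=
  recvCount (sState τ (env choice ω) (t - 1)).alive (env choice ω t) u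

/-- `r_t(N(v))`: the number of balls received at round `t` by the neighbourhood of `v`. -/
def recvNbhd {d : ℕ} (τ : ℝ) (Nb : C → Finset 𝕊) (choice : ℕ → C → Fin d → Ω → 𝕊)
    (t : ℕ) (v : C) (ω : Ω) : ℕ :=
  ∑ u ∈ Nb v, recvAt τ choice t u ω

/-- Server `u` is burned at round `t`: it has received at least `τ = c·d` balls
during rounds `1, …, t`. -/
def burnedAt {d : ℕ} (τ : ℝ) (choice : ℕ → C → Fin d → Ω → 𝕊) (t : ℕ) (u : 𝕊) (ω : Ω) :
    Prop :=
  τ ≤ ((sState τ (env choice ω) t).total u : ℝ)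

/-- `S_t(v)`: the fraction of burned servers in the neighbourhood of `v` at round `t`. -/
def fracBurned {d : ℕ} (τ : ℝ) (Nb : C → Finset 𝕊) (choice : ℕ → C → Fin d → Ω → 𝕊)
    (t : ℕ) (v : C) (ω : Ω) : ℝ :=
  ((Nb v).filter (fun u => burnedAt τ choice t u ω)).card / (Nb v).card

/-- `K_t(v) = (1/(c·d·Δ_v)) · Σ_{s=1}^t r_s(N(v))`. -/
def Kval {d : ℕ} (c : ℝ) (Nb : C → Finset 𝕊) (choice : ℕ → C → Fin d → Ω → 𝕊)
    (t : ℕ) (v : C) (ω : Ω) : ℝ :=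
  (∑ s ∈ Finset.Icc 1 t, (recvNbhd (c * d) Nb choice s v ω : ℝ)) / (c * d * (Nb v).card)

/-- The number of balls alive at the beginning of round `t + 1` (after `t` rounds
of SAER). -/
def aliveNum {d : ℕ} (τ : ℝ) (choice : ℕ → C → Fin d → Ω → 𝕊) (t : ℕ) (ω : Ω) : ℕ :=
  (Finset.univ.filter (fun p : C × Fin d => (sState τ (env choice ω) t).alive p.1 p.2)).card

/-- The work of SAER: every alive ball produces one request message and one answer
message in each round, hence the total number of exchanged messages is
`2 · Σ_t (number of balls alive at the beginning of round t)`. -/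
def workOf {d : ℕ} (τ : ℝ) (choice : ℕ → C → Fin d → Ω → 𝕊) (ω : Ω) : ℝ≥0∞ :=
  2 * ∑' t : ℕ, (aliveNum τ choice t ω : ℝ≥0∞)

/-- The number of balls alive after `t` rounds of RAES. -/
def aliveNumR {d : ℕ} (τ : ℝ) (choice : ℕ → C → Fin d → Ω → 𝕊) (t : ℕ) (ω : Ω) : ℕ :=
  (Finset.univ.filter (fun p : C × Fin d => (rState τ (env choice ω) t).alive p.1 p.2)).card

/-- The work of RAES. -/
def workOfR {d : ℕ} (τ : ℝ) (choice : ℕ → C → Fin d → Ω → 𝕊) (ω : Ω) : ℝ≥0∞ :=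
  2 * ∑' t : ℕ, (aliveNumR τ choice t ω : ℝ≥0∞)

/-- The random environment of the protocol: for every round `t`, client `v` and ball
index `i`, the destination `choice t v i` is uniform on the neighbourhood `Nb v`, and
all these choices (over all rounds, clients and ball indices) are mutually independent. -/
def UnifIndep {d : ℕ} [MeasurableSpace Ω] (P : Measure Ω) (Nb : C → Finset 𝕊)
    (choice : ℕ → C → Fin d → Ω → 𝕊) : Prop :=
  (∀ t v i u, P {ω | choice t v i ω = u}
      = if u ∈ Nb v then ((Nb v).card : ℝ≥0∞)⁻¹ else 0) ∧
  iIndepFun (m := fun _ : ℕ × C × Fin d => (⊤ : MeasurableSpace 𝕊))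
    (fun (p : ℕ × C × Fin d) ω => choice p.1 p.2.1 p.2.2 ω) P

/-- The degree of a server `u`: the number of clients having `u` in their neighbourhood. -/
def serverDeg (Nb : C → Finset 𝕊) (u : 𝕊) : ℕ :=
  (Finset.univ.filter (fun v => u ∈ Nb v)).card

/-- The bipartite graph given by the neighbourhoods `Nb` is `Δ`-regular. -/
def Regular (Nb : C → Finset 𝕊) (Δ : ℕ) : Prop :=
  (∀ v, (Nb v).card = Δ) ∧ (∀ u, serverDeg Nb u = Δ)

section Aux

variable {C 𝕊 Ω : Type*} [Fintype C] [Fintype 𝕊]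

lemma recvNbhd_one {d : ℕ} (τ : ℝ) (Nb : C → Finset 𝕊) (choice : ℕ → C → Fin d → Ω → 𝕊)
    (v : C) (ω : Ω) :
    recvNbhd τ Nb choice 1 v ω =
      (Finset.univ.filter (fun p : C × Fin d => choice 1 p.1 p.2 ω ∈ Nb v)).card := by
  classical
  have h0 : recvNbhd τ Nb choice 1 v ω
      = ∑ u ∈ Nb v, (Finset.univ.filter
          (fun p : C × Fin d => choice 1 p.1 p.2 ω = u)).card := by
    unfold recvNbhd recvAt recvCount
    refine Finset.sum_congr rfl fun u _ => ?_
    congr 1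
    ext p
    simp [sState, env]
  rw [h0]
  rw [Finset.card_eq_sum_card_fiberwise
    (f := fun p : C × Fin d => choice 1 p.1 p.2 ω) (t := Nb v)
    (s := Finset.univ.filter (fun p : C × Fin d => choice 1 p.1 p.2 ω ∈ Nb v))
    (fun p hp => (Finset.mem_filter.mp hp).2)]
  refine Finset.sum_congr rfl fun u hu => ?_
  congr 1
  ext p
  simp only [Finset.mem_filter, Finset.mem_univ, true_and]
  exact ⟨fun h => ⟨by rw [h]; exact hu, h⟩, fun h => h.2⟩

lemma delta_pos {d : ℕ} [MeasurableSpace Ω] (P : Measure Ω) [IsProbabilityMeasure P]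
    (Nb : C → Finset 𝕊) (Δ : ℕ) (hcard : ∀ v, (Nb v).card = Δ) (hd : 1 ≤ d)
    (choice : ℕ → C → Fin d → Ω → 𝕊) (h : UnifIndep P Nb choice) (v : C) : 0 < Δ := by
  by_contra hΔ
  have hΔ0 : Δ = 0 := by omega
  have hNb : Nb v = ∅ := Finset.card_eq_zero.mp (by rw [hcard v, hΔ0])
  have hcov : (Set.univ : Set Ω) ⊆ ⋃ u : 𝕊, {ω | choice 1 v ⟨0, hd⟩ ω = u} :=
    fun ω _ => Set.mem_iUnion.mpr ⟨_, rfl⟩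
  have hle : (1 : ℝ≥0∞) ≤ 0 := by
    calc (1 : ℝ≥0∞) = P Set.univ := (measure_univ).symm
    _ ≤ P (⋃ u : 𝕊, {ω | choice 1 v ⟨0, hd⟩ ω = u}) := measure_mono hcov
    _ ≤ ∑' u : 𝕊, P {ω | choice 1 v ⟨0, hd⟩ ω = u} := measure_iUnion_le _
    _ = 0 := by
        rw [tsum_fintype]
        refine Finset.sum_eq_zero fun u _ => ?_
        rw [h.1 1 v ⟨0, hd⟩ u, hNb]
        simp
  simp at hle

lemma kval_le {d : ℕ} (c : ℝ) (hc : 1 ≤ c) (Nb : C → Finset 𝕊) (Δ : ℕ) (hΔ : 0 < Δ)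
    (v : C) (hcard : (Nb v).card = Δ) (hd : 1 ≤ d)
    (choice : ℕ → C → Fin d → Ω → 𝕊) (ω : Ω)
    (hr : recvNbhd (c * d) Nb choice 1 v ω ≤ 2 * d * Δ) :
    Kval c Nb choice 1 v ω ≤ 2 / c := by
  unfold Kval
  rw [Finset.Icc_self, Finset.sum_singleton, hcard]
  have hc0 : (0:ℝ) < c := lt_of_lt_of_le one_pos hc
  have hd0 : (0:ℝ) < d := by exact_mod_cast hd
  have hΔ0 : (0:ℝ) < Δ := by exact_mod_cast hΔ
  have hrR : (recvNbhd (c * d) Nb choice 1 v ω : ℝ) ≤ 2 * d * Δ := by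
    exact_mod_cast hr
  rw [div_le_div_iff₀ (by positivity) hc0]
  nlinarith [hrR, mul_pos hd0 hΔ0]

end Aux

section Chernoff

variable {C 𝕊 Ω : Type*} [Fintype C] [Fintype 𝕊]

lemma chernoff_one {d : ℕ} [MeasurableSpace Ω] (P : Measure Ω) [IsProbabilityMeasure P]
    (Nb : C → Finset 𝕊) (Δ : ℕ) (hreg : Regular Nb Δ) (hΔ : 0 < Δ)
    (choice : ℕ → C → Fin d → Ω → 𝕊) (h : UnifIndep P Nb choice) (v : C) :
    P {ω | 2 * d * Δ ≤ (Finset.univ.filter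
        (fun p : C × Fin d => choice 1 p.1 p.2 ω ∈ Nb v)).card}
      ≤ ENNReal.ofReal (Real.exp (-((d * Δ : ℕ) : ℝ) / 3)) := by
  classical
  set X : (C × Fin d → 𝕊) → ℕ :=
    fun g => (Finset.univ.filter (fun p : C × Fin d => g p ∈ Nb v)).card with hX
  set w : (C × Fin d → 𝕊) → ℝ≥0∞ :=
    fun g => ∏ p : C × Fin d, (if g p ∈ Nb p.1 then ((Δ : ℝ≥0∞))⁻¹ else 0) with hw
  set A : Finset (C × Fin d → 𝕊) :=
    Finset.univ.filter (fun g => 2 * d * Δ ≤ X g) with hA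
  -- singleton probabilities
  have hsing : ∀ g : C × Fin d → 𝕊,
      P {ω | ∀ p : C × Fin d, choice 1 p.1 p.2 ω = g p} = w g := by
    intro g
    set S : Finset (ℕ × C × Fin d) :=
      Finset.univ.image (fun p : C × Fin d => ((1:ℕ), p)) with hS
    set s : ℕ × C × Fin d → Set Ω :=
      fun q => {ω | choice q.1 q.2.1 q.2.2 ω = g q.2} with hs
    have hinter : {ω | ∀ p : C × Fin d, choice 1 p.1 p.2 ω = g p} = ⋂ q ∈ S, s q := by
      ext ω
      simp only [Set.mem_setOf_eq, Set.mem_iInter, hS, Finset.mem_image, Finset.mem_univ,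
        true_and, hs]
      constructor
      · rintro hg q ⟨p, rfl⟩; exact hg p
      · intro hg p; exact hg (1, p) ⟨p, rfl⟩
    have hmeas : ∀ q ∈ S, MeasurableSet[(⊤ : MeasurableSpace 𝕊).comap
        (fun ω => choice q.1 q.2.1 q.2.2 ω)] (s q) :=
      fun q _ => ⟨{g q.2}, trivial, rfl⟩
    have hinj : ∀ p ∈ (Finset.univ : Finset (C × Fin d)), ∀ p' ∈ Finset.univ,
        ((1:ℕ), p) = ((1:ℕ), p') → p = p' := by
      intro p _ p' _ hpp'
      exact (Prod.mk.injEq _ _ _ _).mp hpp' |>.2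
    rw [hinter, h.2.meas_biInter hmeas, hS, Finset.prod_image hinj, hw]
    refine Finset.prod_congr rfl fun p _ => ?_
    have := h.1 1 p.1 p.2 (g p)
    rw [hs]
    simp only []
    rw [this, (hreg.1 p.1)]
  -- cover by singletons
  have hcover : P {ω | 2 * d * Δ ≤ (Finset.univ.filter
        (fun p : C × Fin d => choice 1 p.1 p.2 ω ∈ Nb v)).card} ≤ ∑ g ∈ A, w g := by
    have hsub : {ω | 2 * d * Δ ≤ (Finset.univ.filter
          (fun p : C × Fin d => choice 1 p.1 p.2 ω ∈ Nb v)).card}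
        ⊆ ⋃ g ∈ A, {ω | ∀ p : C × Fin d, choice 1 p.1 p.2 ω = g p} := by
      intro ω hω
      refine Set.mem_iUnion₂.mpr ⟨fun p : C × Fin d => choice 1 p.1 p.2 ω, ?_, fun p => rfl⟩
      simp only [hA, Finset.mem_filter, Finset.mem_univ, true_and, hX]
      exact hω
    calc P _ ≤ P (⋃ g ∈ A, {ω | ∀ p : C × Fin d, choice 1 p.1 p.2 ω = g p}) :=
          measure_mono hsub
      _ ≤ ∑ g ∈ A, P {ω | ∀ p : C × Fin d, choice 1 p.1 p.2 ω = g p} :=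
          measure_biUnion_finset_le _ _
      _ = ∑ g ∈ A, w g := Finset.sum_congr rfl fun g _ => hsing g
  refine hcover.trans ?_
  -- the tilted weight
  set φ : (C × Fin d) → 𝕊 → ℝ≥0∞ := fun p u =>
    (if u ∈ Nb p.1 then ((Δ : ℝ≥0∞))⁻¹ else 0) * (if u ∈ Nb v then 2 else 1) with hφ
  have h2X : ∀ g : C × Fin d → 𝕊,
      (∏ p : C × Fin d, (if g p ∈ Nb v then (2:ℝ≥0∞) else 1)) = 2 ^ X g := by
    intro g
    rw [← Finset.prod_filter_mul_prod_filter_not Finset.univ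
      (fun p : C × Fin d => g p ∈ Nb v)]
    rw [Finset.prod_ite_of_true (by intro p hp; exact (Finset.mem_filter.mp hp).2),
      Finset.prod_ite_of_false (by intro p hp; exact (Finset.mem_filter.mp hp).2),
      Finset.prod_const, Finset.prod_const, one_pow, mul_one, hX]
  have hfac : ∀ g : C × Fin d → 𝕊, w g * 2 ^ X g = ∏ p : C × Fin d, φ p (g p) := by
    intro g
    rw [hw, ← h2X, ← Finset.prod_mul_distrib]
  have h4ne0 : ((4:ℝ≥0∞) ^ (d * Δ)) ≠ 0 := pow_ne_zero _ (by norm_num)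
  have h4netop : ((4:ℝ≥0∞) ^ (d * Δ)) ≠ ⊤ := ENNReal.pow_ne_top (by norm_num)
  have hstep1 : ∑ g ∈ A, w g
      ≤ ((4:ℝ≥0∞) ^ (d * Δ))⁻¹ * ∏ p : C × Fin d, ∑ u : 𝕊, φ p u := by
    have hterm : ∀ g ∈ A, w g ≤ ((4:ℝ≥0∞) ^ (d * Δ))⁻¹ * ∏ p : C × Fin d, φ p (g p) := by
      intro g hg
      have hXg : 2 * d * Δ ≤ X g := by
        simpa [hA, hX] using hg
      have h4 : (4:ℝ≥0∞) ^ (d * Δ) ≤ 2 ^ X g := by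
        calc (4:ℝ≥0∞) ^ (d * Δ) = 2 ^ (2 * d * Δ) := by
              rw [show (4:ℝ≥0∞) = 2 ^ 2 by norm_num, ← pow_mul, mul_assoc]
          _ ≤ 2 ^ X g := pow_le_pow_right₀ one_le_two hXg
      calc w g = ((4:ℝ≥0∞) ^ (d * Δ))⁻¹ * ((4:ℝ≥0∞) ^ (d * Δ) * w g) := by
            rw [← mul_assoc, ENNReal.inv_mul_cancel h4ne0 h4netop, one_mul]
        _ ≤ ((4:ℝ≥0∞) ^ (d * Δ))⁻¹ * (2 ^ X g * w g) :=
            mul_le_mul_right (mul_le_mul_left h4 _) _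
        _ = ((4:ℝ≥0∞) ^ (d * Δ))⁻¹ * ∏ p : C × Fin d, φ p (g p) := by
            rw [mul_comm ((2:ℝ≥0∞) ^ X g), hfac]
    calc ∑ g ∈ A, w g ≤ ∑ g ∈ A, ((4:ℝ≥0∞) ^ (d * Δ))⁻¹ * ∏ p : C × Fin d, φ p (g p) :=
          Finset.sum_le_sum hterm
      _ ≤ ∑ g : C × Fin d → 𝕊, ((4:ℝ≥0∞) ^ (d * Δ))⁻¹ * ∏ p : C × Fin d, φ p (g p) :=
          Finset.sum_le_sum_of_subset (Finset.filter_subset _ _)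
      _ = ((4:ℝ≥0∞) ^ (d * Δ))⁻¹ * ∑ g : C × Fin d → 𝕊, ∏ p : C × Fin d, φ p (g p) := by
          rw [Finset.mul_sum]
      _ = ((4:ℝ≥0∞) ^ (d * Δ))⁻¹ * ∏ p : C × Fin d, ∑ u : 𝕊, φ p u := by
          rw [Finset.prod_univ_sum, Fintype.piFinset_univ]
  refine hstep1.trans ?_
  -- evaluate the per-coordinate sums
  set b : C × Fin d → ℕ := fun p => ((Nb p.1) ∩ (Nb v)).card with hb
  have hΔR : (0:ℝ) < Δ := by exact_mod_cast hΔ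
  have hfactor : ∀ p : C × Fin d,
      (∑ u : 𝕊, φ p u) ≤ ENNReal.ofReal (Real.exp ((b p : ℝ) / Δ)) := by
    intro p
    have h1 : (∑ u : 𝕊, φ p u)
        = ((Δ : ℝ≥0∞))⁻¹ * ∑ u ∈ Nb p.1, (if u ∈ Nb v then (2:ℝ≥0∞) else 1) := by
      have hφu : ∀ u : 𝕊, φ p u
          = if u ∈ Nb p.1 then ((Δ:ℝ≥0∞))⁻¹ * (if u ∈ Nb v then 2 else 1) else 0 := by
        intro u
        simp only [hφ]
        split_ifs <;> simp
      rw [Finset.sum_congr rfl fun u _ => hφu u, Finset.sum_ite_mem,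
        Finset.univ_inter, Finset.mul_sum]
    have h2 : ∑ u ∈ Nb p.1, (if u ∈ Nb v then (2:ℝ≥0∞) else 1)
        = ((Δ : ℝ≥0∞)) + (b p : ℝ≥0∞) := by
      have hsplit : ∀ u : 𝕊, (if u ∈ Nb v then (2:ℝ≥0∞) else 1)
          = 1 + (if u ∈ Nb v then 1 else 0) := by
        intro u; split_ifs <;> norm_num
      rw [Finset.sum_congr rfl fun u _ => hsplit u, Finset.sum_add_distrib,
        Finset.sum_const, Finset.sum_boole, Finset.filter_mem_eq_inter]
      rw [hreg.1 p.1, hb]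
      simp [nsmul_eq_mul]
    have h3 : (∑ u : 𝕊, φ p u) = ENNReal.ofReal (1 + (b p : ℝ) / Δ) := by
      rw [h1, h2, mul_add, ENNReal.inv_mul_cancel
        (by exact_mod_cast Nat.cast_ne_zero.mpr hΔ.ne' : ((Δ:ℝ≥0∞)) ≠ 0)
        (ENNReal.natCast_ne_top Δ)]
      rw [ENNReal.ofReal_add zero_le_one (by positivity), ENNReal.ofReal_one,
        ENNReal.ofReal_div_of_pos hΔR, ENNReal.ofReal_natCast, ENNReal.ofReal_natCast,
        div_eq_mul_inv, mul_comm]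
    rw [h3]
    exact ENNReal.ofReal_le_ofReal (by linarith [Real.add_one_le_exp ((b p : ℝ) / Δ)])
  have hsumb : ∑ p : C × Fin d, ((b p : ℝ) / Δ) = ((d * Δ : ℕ) : ℝ) := by
    have hb1 : ∀ wc : C, ((Nb wc) ∩ (Nb v)).card
        = ∑ u ∈ Nb v, (if u ∈ Nb wc then 1 else 0) := by
      intro wc
      rw [Finset.sum_boole]
      rw [Finset.filter_mem_eq_inter, Finset.inter_comm]
      norm_cast
    have hsumN : ∑ wc : C, ((Nb wc) ∩ (Nb v)).card = Δ * Δ := by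
      rw [Finset.sum_congr rfl fun wc _ => hb1 wc, Finset.sum_comm]
      have : ∀ u ∈ Nb v, (∑ wc : C, if u ∈ Nb wc then 1 else 0) = Δ := by
        intro u _
        have := hreg.2 u
        rw [← this]
        unfold serverDeg
        rw [Finset.sum_boole]
        norm_cast
      rw [Finset.sum_congr rfl this, Finset.sum_const, hreg.1 v, smul_eq_mul]
    have hsump : ∑ p : C × Fin d, b p = d * (Δ * Δ) := by
      rw [hb, Fintype.sum_prod_type]
      have : ∀ wc : C, ∑ _i : Fin d, ((Nb wc) ∩ (Nb v)).card
          = d * ((Nb wc) ∩ (Nb v)).card := by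
        intro wc; rw [Finset.sum_const, Finset.card_univ, Fintype.card_fin, smul_eq_mul]
      rw [Finset.sum_congr rfl fun wc _ => this wc, ← Finset.mul_sum, hsumN]
    rw [← Finset.sum_div]
    have : ∑ p : C × Fin d, (b p : ℝ) = ((d * (Δ * Δ) : ℕ) : ℝ) := by
      rw [← hsump]; push_cast; ring
    rw [this]
    push_cast
    field_simp
  have hprod : (∏ p : C × Fin d, ∑ u : 𝕊, φ p u)
      ≤ ENNReal.ofReal (Real.exp ((d * Δ : ℕ) : ℝ)) := by
    calc (∏ p : C × Fin d, ∑ u : 𝕊, φ p u)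
        ≤ ∏ p : C × Fin d, ENNReal.ofReal (Real.exp ((b p : ℝ) / Δ)) :=
          Finset.prod_le_prod' fun p _ => hfactor p
      _ = ENNReal.ofReal (∏ p : C × Fin d, Real.exp ((b p : ℝ) / Δ)) :=
          (ENNReal.ofReal_prod_of_nonneg fun p _ => (Real.exp_pos _).le).symm
      _ = ENNReal.ofReal (Real.exp ((d * Δ : ℕ) : ℝ)) := by
          rw [← Real.exp_sum, hsumb]
  calc ((4:ℝ≥0∞) ^ (d * Δ))⁻¹ * ∏ p : C × Fin d, ∑ u : 𝕊, φ p u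
      ≤ ((4:ℝ≥0∞) ^ (d * Δ))⁻¹ * ENNReal.ofReal (Real.exp ((d * Δ : ℕ) : ℝ)) :=
        mul_le_mul_right hprod _
    _ ≤ ENNReal.ofReal (Real.exp (-((d * Δ : ℕ) : ℝ) / 3)) := by
        have h4R : ((4:ℝ≥0∞) ^ (d * Δ)) = ENNReal.ofReal ((4:ℝ) ^ (d * Δ)) := by
          rw [ENNReal.ofReal_pow (by norm_num)]
          norm_num
        rw [h4R, ← ENNReal.ofReal_inv_of_pos (by positivity),
          ← ENNReal.ofReal_mul (by positivity)]
        refine ENNReal.ofReal_le_ofReal ?_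
        set mr : ℝ := ((d * Δ : ℕ) : ℝ) with hmr
        have hmr0 : 0 ≤ mr := by rw [hmr]; positivity
        have h4exp : ((4:ℝ) ^ (d * Δ)) = Real.exp ((d * Δ : ℕ) * Real.log 4) := by
          rw [Real.exp_nat_mul, Real.exp_log (by norm_num : (0:ℝ) < 4)]
        have hlog4 : Real.log 4 = 2 * Real.log 2 := by
          rw [show (4:ℝ) = 2 ^ 2 by norm_num, Real.log_pow]; push_cast; ring
        rw [h4exp, ← hmr, ← Real.exp_neg, ← Real.exp_add]
        refine Real.exp_le_exp.mpr ?_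
        have hl2 : (0.6931471803 : ℝ) < Real.log 2 := Real.log_two_gt_d9
        rw [hlog4]
        nlinarith [hmr0, hl2]

end Chernoff

section MainAux

variable {C 𝕊 Ω : Type*} [Fintype C] [Fintype 𝕊]

lemma main_aux {d : ℕ} [MeasurableSpace Ω] (P : Measure Ω) [IsProbabilityMeasure P]
    (Nb : C → Finset 𝕊) (Δ : ℕ) (hreg : Regular Nb Δ) (hd : 1 ≤ d) (c : ℝ) (hc : 1 ≤ c)
    (choice : ℕ → C → Fin d → Ω → 𝕊) (h : UnifIndep P Nb choice) :
    (∀ v : C, P {ω | 2 * d * Δ ≤ recvNbhd (c * d) Nb choice 1 v ω}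
        ≤ ENNReal.ofReal (Real.exp (-((d * Δ : ℕ) : ℝ) / 3))) ∧
    1 - (Fintype.card C : ℝ≥0∞) * ENNReal.ofReal (Real.exp (-((d * Δ : ℕ) : ℝ) / 3)) ≤
        P {ω | ∀ v : C, recvNbhd (c * d) Nb choice 1 v ω ≤ 2 * d * Δ} ∧
    {ω : Ω | ∀ v : C, recvNbhd (c * d) Nb choice 1 v ω ≤ 2 * d * Δ} ⊆
        {ω : Ω | ∀ v : C, Kval c Nb choice 1 v ω ≤ 2 / c} := by
  classical
  by_cases hCne : Nonempty C
  · obtain ⟨v0⟩ := hCne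
    have hΔ : 0 < Δ := delta_pos P Nb Δ hreg.1 hd choice h v0
    have hb1 : ∀ v : C, P {ω | 2 * d * Δ ≤ recvNbhd (c * d) Nb choice 1 v ω}
        ≤ ENNReal.ofReal (Real.exp (-((d * Δ : ℕ) : ℝ) / 3)) := by
      intro v
      have hset : {ω | 2 * d * Δ ≤ recvNbhd (c * d) Nb choice 1 v ω}
          = {ω | 2 * d * Δ ≤ (Finset.univ.filter
              (fun p : C × Fin d => choice 1 p.1 p.2 ω ∈ Nb v)).card} := by
        ext ω; rw [Set.mem_setOf_eq, Set.mem_setOf_eq, recvNbhd_one]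
      rw [hset]
      exact chernoff_one P Nb Δ hreg hΔ choice h v
    have hb2 : 1 - (Fintype.card C : ℝ≥0∞)
          * ENNReal.ofReal (Real.exp (-((d * Δ : ℕ) : ℝ) / 3)) ≤
        P {ω | ∀ v : C, recvNbhd (c * d) Nb choice 1 v ω ≤ 2 * d * Δ} := by
      refine tsub_le_iff_right.mpr ?_
      have hcov : (Set.univ : Set Ω) ⊆
          {ω | ∀ v : C, recvNbhd (c * d) Nb choice 1 v ω ≤ 2 * d * Δ}
          ∪ ⋃ v : C, {ω | 2 * d * Δ ≤ recvNbhd (c * d) Nb choice 1 v ω} := by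
        intro ω _
        by_cases hgood : ∀ v : C, recvNbhd (c * d) Nb choice 1 v ω ≤ 2 * d * Δ
        · exact Or.inl hgood
        · push_neg at hgood
          obtain ⟨v, hv⟩ := hgood
          exact Or.inr (Set.mem_iUnion.mpr ⟨v, hv.le⟩)
      calc (1 : ℝ≥0∞) = P Set.univ := measure_univ.symm
        _ ≤ P ({ω | ∀ v : C, recvNbhd (c * d) Nb choice 1 v ω ≤ 2 * d * Δ}
            ∪ ⋃ v : C, {ω | 2 * d * Δ ≤ recvNbhd (c * d) Nb choice 1 v ω}) :=
            measure_mono hcov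
        _ ≤ P {ω | ∀ v : C, recvNbhd (c * d) Nb choice 1 v ω ≤ 2 * d * Δ}
            + P (⋃ v : C, {ω | 2 * d * Δ ≤ recvNbhd (c * d) Nb choice 1 v ω}) :=
            measure_union_le _ _
        _ ≤ P {ω | ∀ v : C, recvNbhd (c * d) Nb choice 1 v ω ≤ 2 * d * Δ}
            + (Fintype.card C : ℝ≥0∞)
              * ENNReal.ofReal (Real.exp (-((d * Δ : ℕ) : ℝ) / 3)) := by
            refine add_le_add_right ?_ _
            calc P (⋃ v : C, {ω | 2 * d * Δ ≤ recvNbhd (c * d) Nb choice 1 v ω})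
                ≤ ∑' v : C, P {ω | 2 * d * Δ ≤ recvNbhd (c * d) Nb choice 1 v ω} :=
                  measure_iUnion_le _
              _ = ∑ v : C, P {ω | 2 * d * Δ ≤ recvNbhd (c * d) Nb choice 1 v ω} :=
                  tsum_fintype _
              _ ≤ ∑ _v : C, ENNReal.ofReal (Real.exp (-((d * Δ : ℕ) : ℝ) / 3)) :=
                  Finset.sum_le_sum fun v _ => hb1 v
              _ = (Fintype.card C : ℝ≥0∞)
                  * ENNReal.ofReal (Real.exp (-((d * Δ : ℕ) : ℝ) / 3)) := by
                  rw [Finset.sum_const, Finset.card_univ, nsmul_eq_mul]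
    refine ⟨hb1, hb2, ?_⟩
    intro ω hω v
    exact kval_le c hc Nb Δ hΔ v (hreg.1 v) hd choice ω (hω v)
  · have hCempty : IsEmpty C := not_nonempty_iff.mp hCne
    have huniv : {ω : Ω | ∀ v : C, recvNbhd (c * d) Nb choice 1 v ω ≤ 2 * d * Δ}
        = Set.univ := Set.eq_univ_of_forall fun ω v => (hCempty.false v).elim
    refine ⟨fun v => (hCempty.false v).elim, ?_, ?_⟩
    · rw [huniv, measure_univ]
      exact tsub_le_self.trans le_rfl
    · rw [huniv]
      exact fun ω _ v => (hCempty.false v).elim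

end MainAux

/-- Lemma 8, first round, regular case. For all `c, d ≥ 1` and each
client `v`, `P(r_1(N(v)) ≥ 2dΔ) ≤ e^{−dΔ/3}`; consequently `P(r_1 ≤ 2dΔ) ≥ 1 − n·e^{−dΔ/3}`
and `P(K_1 ≤ 2/c) ≥ 1 − n·e^{−dΔ/3}`.  In particular, if `Δ ≥ η log² n` for a constant
`η > 0`, then `r_1 ≤ 2dΔ` and `K_1 ≤ 2/c` hold with high probability. -/
theorem saer_first_round_regular :
    (∀ (n : ℕ) (C 𝕊 : Type) [Fintype C] [Fintype 𝕊],
      Fintype.card C = n → Fintype.card 𝕊 = n →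
      ∀ (Nb : C → Finset 𝕊) (Δ : ℕ), Regular Nb Δ →
      ∀ (d : ℕ), 1 ≤ d → ∀ (c : ℝ), 1 ≤ c →
      ∀ (Ω : Type) [MeasurableSpace Ω] (P : Measure Ω) [IsProbabilityMeasure P]
        (choice : ℕ → C → Fin d → Ω → 𝕊), UnifIndep P Nb choice →
        (∀ v : C, P {ω | 2 * d * Δ ≤ recvNbhd (c * d) Nb choice 1 v ω}
            ≤ ENNReal.ofReal (Real.exp (-((d * Δ : ℕ) : ℝ) / 3))) ∧
        1 - n * ENNReal.ofReal (Real.exp (-((d * Δ : ℕ) : ℝ) / 3)) ≤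
            P {ω | ∀ v : C, recvNbhd (c * d) Nb choice 1 v ω ≤ 2 * d * Δ} ∧
        1 - n * ENNReal.ofReal (Real.exp (-((d * Δ : ℕ) : ℝ) / 3)) ≤
            P {ω | ∀ v : C, Kval c Nb choice 1 v ω ≤ 2 / c}) ∧
    (∀ η : ℝ, 0 < η → ∀ (d : ℕ), 1 ≤ d → ∀ (c : ℝ), 1 ≤ c →
      ∃ γ : ℝ, 0 < γ ∧ ∃ N : ℕ, ∀ n : ℕ, N ≤ n →
      ∀ (C 𝕊 : Type) [Fintype C] [Fintype 𝕊],
        Fintype.card C = n → Fintype.card 𝕊 = n →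
        ∀ (Nb : C → Finset 𝕊) (Δ : ℕ), Regular Nb Δ → η * Real.log n ^ 2 ≤ (Δ : ℝ) →
        ∀ (Ω : Type) [MeasurableSpace Ω] (P : Measure Ω) [IsProbabilityMeasure P]
          (choice : ℕ → C → Fin d → Ω → 𝕊), UnifIndep P Nb choice →
          1 - ENNReal.ofReal ((n : ℝ) ^ (-γ)) ≤
            P {ω | (∀ v : C, recvNbhd (c * d) Nb choice 1 v ω ≤ 2 * d * Δ) ∧
                   (∀ v : C, Kval c Nb choice 1 v ω ≤ 2 / c)}) := by
  constructor
  · intro n C 𝕊 _ _ hC h𝕊 Nb Δ hreg d hd c hc Ω _ P _ choice hUI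
    obtain ⟨hb1, hb2, hb3⟩ := main_aux P Nb Δ hreg hd c hc choice hUI
    rw [hC] at hb2
    exact ⟨hb1, hb2, hb2.trans (measure_mono hb3)⟩
  · intro η hη d hd c hc
    refine ⟨1, one_pos, ⌈Real.exp (6 / η)⌉₊ + 1, ?_⟩
    intro n hn C 𝕊 _ _ hC h𝕊 Nb Δ hreg hΔη Ω _ P _ choice hUI
    obtain ⟨hb1, hb2, hb3⟩ := main_aux P Nb Δ hreg hd c hc choice hUI
    rw [hC] at hb2
    have hnR : Real.exp (6 / η) < (n : ℝ) := by
      calc Real.exp (6 / η) ≤ (⌈Real.exp (6 / η)⌉₊ : ℝ) := Nat.le_ceil _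
        _ < (n : ℝ) := by exact_mod_cast Nat.lt_of_lt_of_le (Nat.lt_succ_self _) hn
    have hn0 : (0:ℝ) < n := lt_trans (Real.exp_pos _) hnR
    have hlog : 6 / η ≤ Real.log n := (Real.le_log_iff_exp_le hn0).mpr hnR.le
    have hlog0 : 0 ≤ Real.log n := le_trans (by positivity) hlog
    have h6 : 6 ≤ η * Real.log n := by
      have := (div_le_iff₀ hη).mp hlog
      linarith
    have hmΔ : η * Real.log n ^ 2 ≤ ((d * Δ : ℕ) : ℝ) := by
      have hΔd : (Δ : ℝ) ≤ ((d * Δ : ℕ) : ℝ) := by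
        push_cast
        nlinarith [show (1:ℝ) ≤ d from by exact_mod_cast hd,
          show (0:ℝ) ≤ Δ from by positivity]
      linarith [hΔη]
    have hreal : (n:ℝ) * Real.exp (-((d * Δ : ℕ):ℝ)/3) ≤ (n:ℝ) ^ (-(1:ℝ)) := by
      rw [Real.rpow_neg_one]
      rw [show (n:ℝ) = Real.exp (Real.log n) from (Real.exp_log hn0).symm]
      rw [← Real.exp_neg, ← Real.exp_add]
      refine Real.exp_le_exp.mpr ?_
      nlinarith [hmΔ, h6, hlog0, hη.le]
    have hENN : (n:ℝ≥0∞) * ENNReal.ofReal (Real.exp (-((d * Δ : ℕ):ℝ)/3))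
        ≤ ENNReal.ofReal ((n:ℝ) ^ (-(1:ℝ))) := by
      rw [show ((n:ℝ≥0∞)) = ENNReal.ofReal (n:ℝ) from (ENNReal.ofReal_natCast n).symm,
        ← ENNReal.ofReal_mul (by positivity)]
      exact ENNReal.ofReal_le_ofReal hreal
    calc 1 - ENNReal.ofReal ((n:ℝ) ^ (-(1:ℝ)))
        ≤ 1 - (n:ℝ≥0∞) * ENNReal.ofReal (Real.exp (-((d * Δ : ℕ):ℝ)/3)) :=
          tsub_le_tsub_left hENN 1
      _ ≤ P {ω | ∀ v : C, recvNbhd (c * d) Nb choice 1 v ω ≤ 2 * d * Δ} := hb2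
      _ ≤ P {ω | (∀ v : C, recvNbhd (c * d) Nb choice 1 v ω ≤ 2 * d * Δ) ∧
            (∀ v : C, Kval c Nb choice 1 v ω ≤ 2 / c)} :=
          measure_mono fun ω hω => ⟨hω, hb3 hω⟩


end LoadBalancing
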